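/- Let γ > 0 and let A_p ∈ ℝ^{n×n}, B_w ∈ ℝ^{n×m}, B_p ∈ ℝ^{n×p}, C_p ∈ ℝ^{q×n}, C_z ∈ ℝ^{r×n}, D_z ∈ ℝ^{r×m}, and controller matrices A_c, B_c, C_c be given. Let S, V, W, R, U, Z be n×n real matrices such that P = [[S, V],[Vᵀ, W]] is symmetric and invertible with inverse P⁻¹ = [[R, U],[Uᵀ, Z]]. Define Â = S A_p R + S B_p C_c Uᵀ + V B_c C_p R + V A_c Uᵀ, B̂ = V B_c, Ĉ = C_c Uᵀ, and let A, B, C, D be the closed-loop block matrices. Then, with X = diag(Π₁, I_m, I_r) where Π₁ = [[R, I],[Uᵀ, 0]], one has the congruence identity Xᵀ · [[AᵀP + PA, PB, Cᵀ],[BᵀP, −γI, Dᵀ],[C, D, −γI]] · X = [[Φ₁ + Φ₁ᵀ, A_p + Âᵀ, B_w, R C_zᵀ],[A_pᵀ + Â, Φ₂ + Φ₂ᵀ, S B_w, C_zᵀ],[B_wᵀ, B_wᵀ Sᵀ, −γI, D_zᵀ],[C_z R, C_z, D_z, −γI]], where Φ₁ = A_p R + B_p Ĉ and Φ₂ = S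 A_p + B̂ C_p. -/

import Mathlib

open Matrix

/-- Congruence of the H∞ analysis LMI matrix by
`X = diag(Π₁, I_m, I_r)`, `Π₁ = [[R, I],[Uᵀ, 0]]`: with `P = [[S, V],[Vᵀ, W]]` symmetric and
invertible with inverse `[[R, U],[Uᵀ, Z]]`, and transformed controller variables
`Â = S A_p R + S B_p C_c Uᵀ + V B_c C_p R + V A_c Uᵀ`, `B̂ = V B_c`, `Ĉ = C_c Uᵀ`, one has
`Xᵀ [[AᵀP + PA, PB, Cᵀ],[BᵀP, −γI, Dᵀ],[C, D, −γI]] X =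
 [[Φ₁ + Φ₁ᵀ, A_p + Âᵀ, B_w, R C_zᵀ],[A_pᵀ + Â, Φ₂ + Φ₂ᵀ, S B_w, C_zᵀ],
  [B_wᵀ, B_wᵀ Sᵀ, −γI, D_zᵀ],[C_z R, C_z, D_z, −γI]]`
with `Φ₁ = A_p R + B_p Ĉ`, `Φ₂ = S A_p + B̂ C_p`. -/
theorem stmt_4 (n m p q r : ℕ) (γ : ℝ) (hγ : 0 < γ)
    (Ap : Matrix (Fin n) (Fin n) ℝ) (Bw : Matrix (Fin n) (Fin m) ℝ)
    (Bp : Matrix (Fin n) (Fin p) ℝ) (Cp : Matrix (Fin q) (Fin n) ℝ)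
    (Cz : Matrix (Fin r) (Fin n) ℝ) (Dz : Matrix (Fin r) (Fin m) ℝ)
    (Ac : Matrix (Fin n) (Fin n) ℝ) (Bc : Matrix (Fin n) (Fin q) ℝ)
    (Cc : Matrix (Fin p) (Fin n) ℝ)
    (S V W R U Z : Matrix (Fin n) (Fin n) ℝ)
    (hPsymm : (fromBlocks S V Vᵀ W)ᵀ = fromBlocks S V Vᵀ W)
    (hPinv₁ : fromBlocks S V Vᵀ W * fromBlocks R U Uᵀ Z = 1)
    (hPinv₂ : fromBlocks R U Uᵀ Z * fromBlocks S V Vᵀ W = 1) :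
    -- abbreviations for the closed-loop matrices and the congruence transformation
    ∀ (A : Matrix (Fin n ⊕ Fin n) (Fin n ⊕ Fin n) ℝ)
      (B : Matrix (Fin n ⊕ Fin n) (Fin m) ℝ)
      (C : Matrix (Fin r) (Fin n ⊕ Fin n) ℝ)
      (D : Matrix (Fin r) (Fin m) ℝ)
      (P : Matrix (Fin n ⊕ Fin n) (Fin n ⊕ Fin n) ℝ)
      (X : Matrix (((Fin n ⊕ Fin n) ⊕ Fin m) ⊕ Fin r) (((Fin n ⊕ Fin n) ⊕ Fin m) ⊕ Fin r) ℝ)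
      (Ahat : Matrix (Fin n) (Fin n) ℝ) (Bhat : Matrix (Fin n) (Fin q) ℝ)
      (Chat : Matrix (Fin p) (Fin n) ℝ),
      A = fromBlocks Ap (Bp * Cc) (Bc * Cp) Ac →
      B = fromRows Bw (0 : Matrix (Fin n) (Fin m) ℝ) →
      C = fromCols Cz (0 : Matrix (Fin r) (Fin n) ℝ) →
      D = Dz →
      P = fromBlocks S V Vᵀ W →
      X = fromBlocks
            (fromBlocks (fromBlocks R (1 : Matrix (Fin n) (Fin n) ℝ) Uᵀ 0) 0 0
              (1 : Matrix (Fin m) (Fin m) ℝ))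
            0 0 (1 : Matrix (Fin r) (Fin r) ℝ) →
      Ahat = S * Ap * R + S * Bp * Cc * Uᵀ + V * Bc * Cp * R + V * Ac * Uᵀ →
      Bhat = V * Bc →
      Chat = Cc * Uᵀ →
      Xᵀ *
          fromBlocks
            (fromBlocks (Aᵀ * P + P * A) (P * B) (Bᵀ * P)
              (-(γ • (1 : Matrix (Fin m) (Fin m) ℝ))))
            (fromRows Cᵀ Dᵀ)
            (fromCols C D)
            (-(γ • (1 : Matrix (Fin r) (Fin r) ℝ))) * X =
        fromBlocks
          (fromBlocks
            (fromBlocks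
              ((Ap * R + Bp * Chat) + (Ap * R + Bp * Chat)ᵀ)
              (Ap + Ahatᵀ)
              (Apᵀ + Ahat)
              ((S * Ap + Bhat * Cp) + (S * Ap + Bhat * Cp)ᵀ))
            (fromRows Bw (S * Bw))
            (fromCols Bwᵀ (Bwᵀ * Sᵀ))
            (-(γ • (1 : Matrix (Fin m) (Fin m) ℝ))))
          (fromRows (fromRows (R * Czᵀ) Czᵀ) Dzᵀ)
          (fromCols (fromCols (Cz * R) Cz) Dz)
          (-(γ • (1 : Matrix (Fin r) (Fin r) ℝ))) := by
  intro A B C D P X Ahat Bhat Chat hA hB hC hD hP hX hAhat hBhat hChat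
  subst hA hB hC hD hP hX hAhat hBhat hChat
  -- symmetry of the inverse
  have hQsymm : (fromBlocks R U Uᵀ Z)ᵀ = fromBlocks R U Uᵀ Z := by
    have ht : (fromBlocks R U Uᵀ Z)ᵀ * fromBlocks S V Vᵀ W = 1 := by
      rw [← hPsymm, ← transpose_mul, hPinv₁, transpose_one]
    calc (fromBlocks R U Uᵀ Z)ᵀ
        = (fromBlocks R U Uᵀ Z)ᵀ * (fromBlocks S V Vᵀ W * fromBlocks R U Uᵀ Z) := by
          rw [hPinv₁, mul_one]
      _ = ((fromBlocks R U Uᵀ Z)ᵀ * fromBlocks S V Vᵀ W) * fromBlocks R U Uᵀ Z := by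
          rw [mul_assoc]
      _ = fromBlocks R U Uᵀ Z := by rw [ht, one_mul]
  rw [fromBlocks_transpose, fromBlocks_inj] at hQsymm
  obtain ⟨hR, -, -, hZ⟩ := hQsymm
  have hPsymm' := hPsymm
  rw [fromBlocks_transpose, fromBlocks_inj] at hPsymm'
  obtain ⟨hS, -, -, hW⟩ := hPsymm'
  rw [fromBlocks_multiply, ← fromBlocks_one, fromBlocks_inj] at hPinv₁ hPinv₂
  obtain ⟨h1, h2, h3, h4⟩ := hPinv₁
  obtain ⟨h5, h6, h7, h8⟩ := hPinv₂
  -- notation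
  set Pm : Matrix (Fin n ⊕ Fin n) (Fin n ⊕ Fin n) ℝ := fromBlocks S V Vᵀ W with hPm
  set Acl : Matrix (Fin n ⊕ Fin n) (Fin n ⊕ Fin n) ℝ :=
    fromBlocks Ap (Bp * Cc) (Bc * Cp) Ac with hAcl
  set Pi1 : Matrix (Fin n ⊕ Fin n) (Fin n ⊕ Fin n) ℝ :=
    fromBlocks R (1 : Matrix (Fin n) (Fin n) ℝ) Uᵀ 0 with hPi1
  -- key product identities
  have hMt : Pi1ᵀ * Pm = fromBlocks 1 0 S V := by
    rw [hPi1, hPm, fromBlocks_transpose, fromBlocks_multiply]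
    rw [transpose_transpose, transpose_one, transpose_zero]
    refine fromBlocks_inj.mpr ⟨?_, ?_, ?_, ?_⟩
    · rw [hR, h5]
    · rw [hR, h6]
    · rw [one_mul, zero_mul, add_zero]
    · rw [one_mul, zero_mul, add_zero]
  have hNA : Pi1ᵀ * (Pm * Acl) * Pi1 =
      fromBlocks (Ap * R + Bp * (Cc * Uᵀ)) Ap
        (S * Ap * R + S * Bp * Cc * Uᵀ + V * Bc * Cp * R + V * Ac * Uᵀ)
        (S * Ap + V * Bc * Cp) := by
    rw [← mul_assoc, hMt, hAcl, fromBlocks_multiply, fromBlocks_multiply]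
    refine fromBlocks_inj.mpr ⟨?_, ?_, ?_, ?_⟩
    · simp [Matrix.mul_assoc]
    · simp
    · simp only [Matrix.add_mul, Matrix.mul_zero, Matrix.mul_one, add_zero]
      rw [Matrix.mul_assoc S Bp Cc, Matrix.mul_assoc V Bc Cp]
      abel
    · simp [Matrix.mul_assoc]
  have hNAt : Pi1ᵀ * (Aclᵀ * Pm) * Pi1 =
      fromBlocks (Ap * R + Bp * (Cc * Uᵀ))ᵀ
        (S * Ap * R + S * Bp * Cc * Uᵀ + V * Bc * Cp * R + V * Ac * Uᵀ)ᵀ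
        Apᵀ (S * Ap + V * Bc * Cp)ᵀ := by
    have hswap : Aclᵀ * Pm = (Pm * Acl)ᵀ := by rw [transpose_mul, hPm, hPsymm]
    have ht := congrArg Matrix.transpose hNA
    rw [transpose_mul, transpose_mul, transpose_transpose, ← mul_assoc] at ht
    rw [hswap, ht, fromBlocks_transpose]
  have hG : Pi1ᵀ * (Aclᵀ * Pm + Pm * Acl) * Pi1 =
      fromBlocks
        ((Ap * R + Bp * (Cc * Uᵀ)) + (Ap * R + Bp * (Cc * Uᵀ))ᵀ)
        (Ap + (S * Ap * R + S * Bp * Cc * Uᵀ + V * Bc * Cp * R + V * Ac * Uᵀ)ᵀ)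
        (Apᵀ + (S * Ap * R + S * Bp * Cc * Uᵀ + V * Bc * Cp * R + V * Ac * Uᵀ))
        ((S * Ap + V * Bc * Cp) + (S * Ap + V * Bc * Cp)ᵀ) := by
    rw [Matrix.mul_add, Matrix.add_mul, hNA, hNAt, fromBlocks_add]
    refine fromBlocks_inj.mpr ⟨?_, ?_, ?_, ?_⟩ <;> abel
  have hPB : Pi1ᵀ * (Pm * fromRows Bw (0 : Matrix (Fin n) (Fin m) ℝ)) = fromRows Bw (S * Bw) := by
    rw [hPm, fromBlocks_mul_fromRows, hPi1, fromBlocks_transpose, fromBlocks_mul_fromRows]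
    rw [transpose_transpose, transpose_one, transpose_zero]
    rw [fromRows_ext_iff]
    constructor
    · simp only [Matrix.mul_zero, add_zero, hR]
      rw [← Matrix.mul_assoc, ← Matrix.mul_assoc, ← Matrix.add_mul, h5, Matrix.one_mul]
    · simp
  have hBP : (fromRows Bw (0 : Matrix (Fin n) (Fin m) ℝ))ᵀ * Pm * Pi1 = fromCols Bwᵀ (Bwᵀ * Sᵀ) := by
    rw [transpose_fromRows, transpose_zero, hPm, fromCols_mul_fromBlocks, hPi1,
      fromCols_mul_fromBlocks, fromCols_ext_iff]
    constructor
    · simp only [Matrix.zero_mul, add_zero]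
      rw [Matrix.mul_assoc, Matrix.mul_assoc, ← Matrix.mul_add, h1, Matrix.mul_one]
    · simp [hS]
  have hCP : fromCols Cz (0 : Matrix (Fin r) (Fin n) ℝ) * Pi1 = fromCols (Cz * R) Cz := by
    rw [hPi1, fromCols_mul_fromBlocks, fromCols_ext_iff]
    constructor <;> simp
  have hPC : Pi1ᵀ * (fromCols Cz (0 : Matrix (Fin r) (Fin n) ℝ))ᵀ = fromRows (R * Czᵀ) Czᵀ := by
    rw [transpose_fromCols, transpose_zero, hPi1, fromBlocks_transpose,
      fromBlocks_mul_fromRows, fromRows_ext_iff]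
    constructor <;> simp [hR]
  simp only [fromBlocks_transpose, transpose_zero, transpose_one, fromBlocks_multiply,
    fromBlocks_mul_fromRows, fromCols_mul_fromBlocks,
    Matrix.zero_mul, Matrix.mul_zero, Matrix.one_mul, Matrix.mul_one, add_zero, zero_add]
  rw [hG, hPB, hBP, hCP, hPC]
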